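/- Let m ≥ 3, n ≥ 5, let S be a self-identifying code of K_m × P_n, and suppose (v_i, j) ∉ S for some 2 ≤ j ≤ n−3. Then both neighboring columns contain a codeword: S ∩ C_{j−1} ≠ ∅ and S ∩ C_{j+1} ≠ ∅. -/

import Mathlib

open SimpleGraph Set

/-- Closed neighborhood of a vertex. -/
def cNbr {V : Type*} (G : SimpleGraph V) (v : V) : Set V := insert v (G.neighborSet v)

/-- `S` is a self-identifying code of `G`. -/
def IsSID {V : Type*} (G : SimpleGraph V) (S : Set V) : Prop :=
  S.Nonempty ∧ ∀ v : V, (cNbr G v ∩ S).Nonempty ∧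
    (⋂ c ∈ cNbr G v ∩ S, cNbr G c) = {v}

/-- Minimum cardinality of a self-identifying code. -/
noncomputable def gammaSID {V : Type*} (G : SimpleGraph V) : ℕ :=
  sInf {k | ∃ S : Set V, IsSID G S ∧ S.ncard = k}

/-- Direct product of the complete graph `K_m` with the path `P_n`. -/
def KmPn (m n : ℕ) : SimpleGraph (Fin m × Fin n) where
  Adj u w := u.1 ≠ w.1 ∧ ((u.2 : ℕ) + 1 = (w.2 : ℕ) ∨ (w.2 : ℕ) + 1 = (u.2 : ℕ))
  symm := ⟨fun u w h => ⟨h.1.symm, h.2.symm⟩⟩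
  loopless := ⟨fun u h => h.1 rfl⟩

/-- Direct product of the complete graph `K_m` with the cycle `C_n`. -/
def KmCn (m n : ℕ) : SimpleGraph (Fin m × ZMod n) where
  Adj u w := u.1 ≠ w.1 ∧ (u.2 + 1 = w.2 ∨ w.2 + 1 = u.2)
  symm := ⟨fun u w h => ⟨h.1.symm, h.2.symm⟩⟩
  loopless := ⟨fun u h => h.1 rfl⟩

theorem stmt10 (m n : ℕ) (hm : 3 ≤ m) (hn : 5 ≤ n) (S : Set (Fin m × Fin n))
    (hS : IsSID (KmPn m n) S) (i : Fin m) (j : ℕ) (hj1 : 2 ≤ j) (hj2 : j ≤ n - 3)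
    (hv : (i, (⟨j, by omega⟩ : Fin n)) ∉ S) :
    (S ∩ {p : Fin m × Fin n | p.2 = (⟨j - 1, by omega⟩ : Fin n)}).Nonempty ∧
      (S ∩ {p : Fin m × Fin n | p.2 = (⟨j + 1, by omega⟩ : Fin n)}).Nonempty := by
  obtain ⟨hne, hcap⟩ := hS.2 (i, (⟨j, by omega⟩ : Fin n))
  constructor
  · by_contra hleft
    rw [Set.not_nonempty_iff_eq_empty] at hleft
    have hw : ((i, (⟨j + 2, by omega⟩ : Fin n)) : Fin m × Fin n) ∈
        ⋂ c ∈ cNbr (KmPn m n) (i, (⟨j, by omega⟩ : Fin n)) ∩ S, cNbr (KmPn m n) c := by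
      rw [Set.mem_iInter₂]
      intro c hc
      obtain ⟨hc1, hc2⟩ := hc
      rcases hc1 with rfl | hadj
      · exact absurd hc2 hv
      · simp only [SimpleGraph.mem_neighborSet, KmPn] at hadj
        obtain ⟨hne1, hor⟩ := hadj
        have hc2' : (c.2 : ℕ) = j + 1 := by
          rcases hor with h | h
          · omega
          · exfalso
            have : c ∈ S ∩ {p : Fin m × Fin n | p.2 = (⟨j - 1, by omega⟩ : Fin n)} := by
              refine ⟨hc2, ?_⟩
              simp only [Set.mem_setOf_eq]
              exact Fin.ext (by simpa using (by omega : (c.2 : ℕ) = j - 1))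
            rw [hleft] at this
            exact this
        right
        simp only [SimpleGraph.mem_neighborSet, KmPn]
        refine ⟨fun h => hne1 h.symm, ?_⟩
        omega
    rw [hcap, Set.mem_singleton_iff, Prod.mk.injEq] at hw
    have := congrArg Fin.val hw.2
    simp at this
  · by_contra hright
    rw [Set.not_nonempty_iff_eq_empty] at hright
    have hw : ((i, (⟨j - 2, by omega⟩ : Fin n)) : Fin m × Fin n) ∈
        ⋂ c ∈ cNbr (KmPn m n) (i, (⟨j, by omega⟩ : Fin n)) ∩ S, cNbr (KmPn m n) c := by
      rw [Set.mem_iInter₂]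
      intro c hc
      obtain ⟨hc1, hc2⟩ := hc
      rcases hc1 with rfl | hadj
      · exact absurd hc2 hv
      · simp only [SimpleGraph.mem_neighborSet, KmPn] at hadj
        obtain ⟨hne1, hor⟩ := hadj
        have hc2' : (c.2 : ℕ) = j - 1 := by
          rcases hor with h | h
          · exfalso
            have : c ∈ S ∩ {p : Fin m × Fin n | p.2 = (⟨j + 1, by omega⟩ : Fin n)} := by
              refine ⟨hc2, ?_⟩
              simp only [Set.mem_setOf_eq]
              exact Fin.ext (by simpa using (by omega : (c.2 : ℕ) = j + 1))
            rw [hright] at this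
            exact this
          · omega
        right
        simp only [SimpleGraph.mem_neighborSet, KmPn]
        refine ⟨fun h => hne1 h.symm, ?_⟩
        omega
    rw [hcap, Set.mem_singleton_iff, Prod.mk.injEq] at hw
    have := congrArg Fin.val hw.2
    simp at this
    omega
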